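/- arXiv:math/0004052 — 5 statements merged into one kernel-verified Lean document; each statement's English description precedes it below -/
import Mathlib

section
/- Let Ω be a compact Hausdorff space and Γ a group acting on Ω by homeomorphisms. Suppose that for any nonempty open subsets U₁, …, Uₙ of Ω there exist g₁, …, gₙ ∈ Γ such that g₁U₁ ∪ ⋯ ∪ gₙUₙ = Ω. Then for any nonnegative continuous functions b₁, …, bₙ : Ω → ℝ with ‖bⱼ‖ = 1 and any ε > 0, there exist g₁, …, gₙ ∈ Γ such that for every ω ∈ Ω, the sum ∑ⱼ bⱼ(gⱼ⁻¹ ω) ≥ 1 − ε. -/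
open Pointwise

theorem stmt0 {Ω Γ : Type*} [TopologicalSpace Ω] [CompactSpace Ω] [T2Space Ω] [Infinite Ω]
    [Group Γ] [MulAction Γ Ω] [ContinuousConstSMul Γ Ω] (n : ℕ)
    (hfill : ∀ U : Fin n → Set Ω, (∀ j, IsOpen (U j)) → (∀ j, (U j).Nonempty) →
      ∃ g : Fin n → Γ, (⋃ j, g j • U j) = Set.univ)
    (b : Fin n → C(Ω, ℝ)) (hb0 : ∀ j, 0 ≤ b j) (hb1 : ∀ j, ‖b j‖ = 1)
    (ε : ℝ) (hε : 0 < ε) :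
    ∃ g : Fin n → Γ, ∀ ω : Ω, 1 - ε ≤ ∑ j, b j ((g j)⁻¹ • ω) := by
  rcases le_or_gt 1 ε with hε1 | hε1
  · refine ⟨fun _ => 1, fun ω => ?_⟩
    have : (0:ℝ) ≤ ∑ j, b j ((1:Γ)⁻¹ • ω) :=
      Finset.sum_nonneg fun j _ => hb0 j _
    linarith
  · set U : Fin n → Set Ω := fun j => (b j) ⁻¹' Set.Ioi (1 - ε) with hU
    have hopen : ∀ j, IsOpen (U j) := fun j =>
      (isOpen_Ioi).preimage (b j).continuous
    have hne : ∀ j, (U j).Nonempty := by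
      intro j
      by_contra h
      rw [Set.not_nonempty_iff_eq_empty] at h
      have hall : ∀ ω, b j ω ≤ 1 - ε := by
        intro ω
        by_contra hw
        push_neg at hw
        exact Set.eq_empty_iff_forall_notMem.mp h ω hw
      have : ‖b j‖ ≤ 1 - ε := by
        rw [ContinuousMap.norm_le _ (by linarith)]
        intro x
        rw [Real.norm_eq_abs, abs_of_nonneg (ContinuousMap.le_def.mp (hb0 j) x)]; exact hall x
      rw [hb1 j] at this
      linarith
    obtain ⟨g, hg⟩ := hfill U hopen hne
    refine ⟨g, fun ω => ?_⟩
    have : ω ∈ ⋃ j, g j • U j := hg ▸ Set.mem_univ ω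
    obtain ⟨j, hj⟩ := Set.mem_iUnion.mp this
    have hmem : (g j)⁻¹ • ω ∈ U j := Set.mem_smul_set_iff_inv_smul_mem.mp hj
    have h1 : 1 - ε ≤ b j ((g j)⁻¹ • ω) := le_of_lt hmem
    calc 1 - ε ≤ b j ((g j)⁻¹ • ω) := h1
    _ ≤ ∑ k, b k ((g k)⁻¹ • ω) :=
      Finset.single_le_sum (f := fun k => b k ((g k)⁻¹ • ω)) (fun k _ => hb0 k _) (Finset.mem_univ j)
end

section
/- Let Ω be a compact Hausdorff space and Γ a group acting on Ω by homeomorphisms. Suppose that for all nonnegative continuous functions b₁, …, bₙ : Ω → ℝ with sup norm 1 and all ε > 0, there exist g₁, …, gₙ ∈ Γ with ∑ⱼ bⱼ(gⱼ⁻¹ω) ≥ 1 − ε for all ω ∈ Ω. Then for any nonempty open subsets U₁, …, Uₙ of Ω there exist g₁, …, gₙ ∈ Γ such that g₁U₁ ∪ ⋯ ∪ gₙUₙ = Ω. -/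
open Pointwise

theorem stmt1 {Ω Γ : Type*} [TopologicalSpace Ω] [CompactSpace Ω] [T2Space Ω]
    [Group Γ] [MulAction Γ Ω] [ContinuousConstSMul Γ Ω] (n : ℕ)
    (h : ∀ b : Fin n → C(Ω, ℝ), (∀ j, 0 ≤ b j) → (∀ j, ‖b j‖ = 1) →
      ∀ ε : ℝ, 0 < ε → ∃ g : Fin n → Γ, ∀ ω : Ω, 1 - ε ≤ ∑ j, b j ((g j)⁻¹ • ω))
    (U : Fin n → Set Ω) (hUopen : ∀ j, IsOpen (U j)) (hUne : ∀ j, (U j).Nonempty) :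
    ∃ g : Fin n → Γ, (⋃ j, g j • U j) = Set.univ := by
  -- pick a point in each U j
  choose x hx using hUne
  -- Urysohn function : 0 on (U j)ᶜ, 1 at x j, values in [0,1]
  have hb : ∀ j : Fin n, ∃ f : C(Ω, ℝ),
      Set.EqOn f 0 (U j)ᶜ ∧ f (x j) = 1 ∧ ∀ y, f y ∈ Set.Icc (0:ℝ) 1 := by
    intro j
    obtain ⟨f, hf0, hf1, hf01⟩ := exists_continuous_zero_one_of_isClosed
      (hUopen j).isClosed_compl isClosed_singleton
      (Set.disjoint_singleton_right.2 (by simpa using hx j))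
    exact ⟨f, hf0, hf1 rfl, hf01⟩
  choose b hb0 hb1 hb01 using hb
  have hbnn : ∀ j, 0 ≤ b j := fun j => fun y => (hb01 j y).1
  have hbnorm : ∀ j, ‖b j‖ = 1 := by
    intro j
    apply le_antisymm
    · exact (ContinuousMap.norm_le _ zero_le_one).2 fun y => by
        rw [Real.norm_eq_abs, abs_le]
        exact ⟨by linarith [(hb01 j y).1], (hb01 j y).2⟩
    · calc (1:ℝ) = ‖b j (x j)‖ := by rw [hb1 j]; simp
        _ ≤ ‖b j‖ := (b j).norm_coe_le_norm (x j)
  obtain ⟨g, hg⟩ := h b hbnn hbnorm (1/2) (by norm_num)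
  refine ⟨g, Set.eq_univ_of_forall fun ω => ?_⟩
  have hsum := hg ω
  have : ∃ j ∈ Finset.univ, (0:ℝ) < b j ((g j)⁻¹ • ω) := by
    apply Finset.exists_lt_of_sum_lt (f := fun _ => (0:ℝ))
    simp only [Finset.sum_const_zero]
    linarith
  obtain ⟨j, -, hj⟩ := this
  have hmem : (g j)⁻¹ • ω ∈ U j := by
    by_contra hc
    have := hb0 j hc
    simp only [Pi.zero_apply] at this
    rw [this] at hj
    exact lt_irrefl _ hj
  exact Set.mem_iUnion.2 ⟨j, Set.mem_smul_set_iff_inv_smul_mem.2 hmem⟩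
end

section
/- Let Γ act on a topological space Ω by homeomorphisms, and suppose the action is topologically transitive: for any nonempty open sets V, W there exists g ∈ Γ with V ∩ gW ≠ ∅. If for each nonempty open subset U of Ω there exist t₁, …, tₙ ∈ Γ with t₁U ∪ ⋯ ∪ tₙU = Ω, then for any nonempty open subsets U₁, …, Uₙ of Ω there exist g₁, …, gₙ ∈ Γ with g₁U₁ ∪ ⋯ ∪ gₙUₙ = Ω. -/
open Pointwise

theorem aux_inter {Ω Γ : Type*} [TopologicalSpace Ω] [Group Γ] [MulAction Γ Ω]
    [ContinuousConstSMul Γ Ω]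
    (htrans : ∀ V W : Set Ω, IsOpen V → V.Nonempty → IsOpen W → W.Nonempty →
      ∃ g : Γ, (V ∩ g • W).Nonempty) (hΩ : Nonempty Ω) :
    ∀ (n : ℕ) (U : Fin n → Set Ω), (∀ j, IsOpen (U j)) → (∀ j, (U j).Nonempty) →
      ∃ a : Fin n → Γ, (⋂ j, a j • U j).Nonempty := by
  intro n
  induction n with
  | zero =>
    intro U _ _
    haveI := hΩ
    exact ⟨fun _ => 1, by simpa using Set.univ_nonempty⟩
  | succ n ih =>
    intro U hUo hUn
    obtain ⟨a, ha⟩ := ih (fun j => U j.succ) (fun j => hUo _) (fun j => hUn _)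
    have hVo : IsOpen (⋂ j, a j • U j.succ) :=
      isOpen_iInter_of_finite fun j => (hUo _).smul _
    obtain ⟨g, x, hx1, hx2⟩ := htrans _ _ hVo ha (hUo 0) (hUn 0)
    refine ⟨Fin.cons g a, x, Set.mem_iInter.2 fun j => ?_⟩
    refine Fin.cases ?_ ?_ j
    · simpa using hx2
    · intro i; simpa using Set.mem_iInter.1 hx1 i

theorem stmt2 {Ω Γ : Type*} [TopologicalSpace Ω] [Group Γ] [MulAction Γ Ω]
    [ContinuousConstSMul Γ Ω] (n : ℕ)
    (htrans : ∀ V W : Set Ω, IsOpen V → V.Nonempty → IsOpen W → W.Nonempty →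
      ∃ g : Γ, (V ∩ g • W).Nonempty)
    (hU : ∀ U : Set Ω, IsOpen U → U.Nonempty →
      ∃ t : Fin n → Γ, (⋃ j, t j • U) = Set.univ)
    (U : Fin n → Set Ω) (hUopen : ∀ j, IsOpen (U j)) (hUne : ∀ j, (U j).Nonempty) :
    ∃ g : Fin n → Γ, (⋃ j, g j • U j) = Set.univ := by
  by_cases hΩ : Nonempty Ω
  · obtain ⟨a, ha⟩ := aux_inter htrans hΩ n U hUopen hUne
    have hVo : IsOpen (⋂ j, a j • U j) :=
      isOpen_iInter_of_finite fun j => (hUopen j).smul (a j)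
    obtain ⟨t, ht⟩ := hU _ hVo ha
    refine ⟨fun j => t j * a j, Set.eq_univ_of_univ_subset ?_⟩
    rw [← ht]
    refine Set.iUnion_mono fun j => ?_
    rw [← smul_smul]
    exact Set.smul_set_mono (Set.iInter_subset _ j)
  · exact ⟨fun _ => 1, Set.eq_univ_of_forall fun x => absurd ⟨x⟩ hΩ⟩
end

section
/- Let Ω be a compact Hausdorff space and let Γ act minimally on Ω by homeomorphisms. Suppose there exist g ∈ Γ, a point x ∈ Ω with gx = x, and an open neighbourhood V of x such that for every open neighbourhood W of x there is N with gᵐV ⊆ W for all m ≥ N. Then there exists an integer n ≥ 1 such that for all nonempty open subsets U₁, …, Uₙ of Ω there exist t₁, …, tₙ ∈ Γ with t₁U₁ ∪ ⋯ ∪ tₙUₙ = Ω. -/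
open Pointwise

theorem stmt3 {Ω Γ : Type*} [TopologicalSpace Ω] [CompactSpace Ω] [T2Space Ω]
    [Group Γ] [MulAction Γ Ω] [ContinuousConstSMul Γ Ω]
    (hmin : ∀ x : Ω, Dense (MulAction.orbit Γ x))
    (g : Γ) (x : Ω) (hgx : g • x = x) (V : Set Ω) (hVopen : IsOpen V) (hxV : x ∈ V)
    (hattr : ∀ W : Set Ω, W ∈ nhds x → ∃ N : ℕ, ∀ m ≥ N, (g ^ m) • V ⊆ W) :
    ∃ n : ℕ, 1 ≤ n ∧ ∀ U : Fin n → Set Ω, (∀ j, IsOpen (U j)) → (∀ j, (U j).Nonempty) →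
      ∃ t : Fin n → Γ, (⋃ j, t j • U j) = Set.univ := by
  -- translates of V cover Ω
  have hcover : (Set.univ : Set Ω) ⊆ ⋃ γ : Γ, γ • V := by
    intro y _
    obtain ⟨z, hzV, γ, rfl⟩ := (hmin y).inter_open_nonempty V hVopen ⟨x, hxV⟩
    exact Set.mem_iUnion.2 ⟨γ⁻¹, ⟨γ • y, hzV, by simp⟩⟩
  obtain ⟨s, hs⟩ := isCompact_univ.elim_finite_subcover (fun γ : Γ => γ • V)
    (fun γ => hVopen.smul γ) hcover
  have hsne : s.Nonempty := by
    obtain ⟨γ, hγs, -⟩ := Set.mem_iUnion₂.1 (hs (Set.mem_univ x))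
    exact ⟨γ, hγs⟩
  set n := s.card with hn
  refine ⟨n, Finset.card_pos.2 hsne, ?_⟩
  set c : Fin n → Γ := fun j => (s.equivFin.symm j : Γ) with hc
  have hcov2 : (Set.univ : Set Ω) ⊆ ⋃ j : Fin n, c j • V := by
    intro y hy
    obtain ⟨γ, hγs, hyγ⟩ := Set.mem_iUnion₂.1 (hs hy)
    refine Set.mem_iUnion.2 ⟨s.equivFin ⟨γ, hγs⟩, ?_⟩
    simpa [hc] using hyγ
  intro U hUopen hUne
  -- pick h j with h j • x ∈ U j
  have hh : ∀ j, ∃ h : Γ, h • x ∈ U j := by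
    intro j
    obtain ⟨z, hz, γ, rfl⟩ := (hmin x).inter_open_nonempty (U j) (hUopen j) (hUne j)
    exact ⟨γ, hz⟩
  choose h hhx using hh
  -- each (h j)⁻¹ • U j is a neighbourhood of x
  have hW : ∀ j, ((h j)⁻¹ • U j : Set Ω) ∈ nhds x := by
    intro j
    refine ((hUopen j).smul _).mem_nhds ?_
    simpa [Set.mem_inv_smul_set_iff] using hhx j
  choose N hN using fun j => hattr _ (hW j)
  set m := Finset.univ.sup N with hm
  have hmV : ∀ j, (g ^ m) • V ⊆ (h j)⁻¹ • U j := fun j =>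
    hN j m (Finset.le_sup (Finset.mem_univ j))
  refine ⟨fun j => c j * (g ^ m)⁻¹ * (h j)⁻¹, ?_⟩
  apply Set.eq_univ_of_univ_subset
  intro y hy
  obtain ⟨j, hj⟩ := Set.mem_iUnion.1 (hcov2 hy)
  obtain ⟨v, hvV, rfl⟩ := hj
  have := hmV j ⟨v, hvV, rfl⟩
  obtain ⟨u, huU, hu⟩ := this
  refine Set.mem_iUnion.2 ⟨j, u, huU, ?_⟩
  have : (h j)⁻¹ • u = (g ^ m) • v := hu
  calc (c j * (g ^ m)⁻¹ * (h j)⁻¹) • u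
      = (c j * (g ^ m)⁻¹) • ((h j)⁻¹ • u) := by rw [mul_smul]
    _ = (c j * (g ^ m)⁻¹) • ((g ^ m) • v) := by rw [this]
    _ = c j • v := by rw [mul_smul, inv_smul_smul]
end

section
/- Let Ω be a compact Hausdorff space with a minimal action of a group Γ, and suppose Ω = O₁ ∪ ⋯ ∪ O_k with each O_j open, together with points ω_j ∈ Ω and elements u_j ∈ Γ such that u_j⁻¹ attracts O_j towards ω_j (for every compact G ⊆ O_j and every neighbourhood W of ω_j there is N with u_j⁻ᵐ G ⊆ W for all m ≥ N). Then for any nonempty open subsets U₁, …, U_k of Ω there exist t₁, …, t_k ∈ Γ with t₁U₁ ∪ ⋯ ∪ t_kU_k = Ω. -/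
open Pointwise

theorem stmt14 {Ω Γ : Type*} [TopologicalSpace Ω] [CompactSpace Ω] [T2Space Ω]
    [Group Γ] [MulAction Γ Ω] [ContinuousConstSMul Γ Ω]
    (hmin : ∀ x : Ω, Dense (MulAction.orbit Γ x))
    (k : ℕ) (O : Fin k → Set Ω) (hOopen : ∀ j, IsOpen (O j))
    (hcover : (⋃ j, O j) = Set.univ)
    (ω : Fin k → Ω) (u : Fin k → Γ)
    (hattr : ∀ j, ∀ G : Set Ω, G ⊆ O j → IsCompact G →
      ∀ W ∈ nhds (ω j), ∃ N : ℕ, ∀ m ≥ N, ((u j)⁻¹) ^ m • G ⊆ W)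
    (U : Fin k → Set Ω) (hUopen : ∀ j, IsOpen (U j)) (hUne : ∀ j, (U j).Nonempty) :
    ∃ t : Fin k → Γ, (⋃ j, t j • U j) = Set.univ := by
  -- Shrink the open cover to a cover by closures of open sets
  obtain ⟨v, hsv, hvo, hv⟩ := exists_subset_iUnion_closure_subset_t2space
    (s := (Set.univ : Set Ω)) isCompact_univ hOopen
    (fun x _ => Set.finite_univ.subset (Set.subset_univ _)) (by rw [hcover])
  -- For each j: a group element moving ω j into U j, then attraction
  have key : ∀ j : Fin k, ∃ t : Γ, closure (v j) ⊆ t • U j := by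
    intro j
    -- minimality: some g with g • ω j ∈ U j
    obtain ⟨_, ⟨g, rfl⟩, hg⟩ := (hmin (ω j)).exists_mem_open (hUopen j) (hUne j)
    -- so ω j ∈ g⁻¹ • U j, an open neighborhood
    have hmem : ω j ∈ g⁻¹ • U j := Set.mem_smul_set_iff_inv_smul_mem.2 (by simpa using hg)
    have hnhds : g⁻¹ • U j ∈ nhds (ω j) :=
      ((hUopen j).smul g⁻¹).mem_nhds hmem
    have hKcpt : IsCompact (closure (v j)) := isClosed_closure.isCompact
    obtain ⟨N, hN⟩ := hattr j (closure (v j)) (hv.1 j) hKcpt _ hnhds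
    refine ⟨u j ^ N * g⁻¹, fun x hx => ?_⟩
    have hx' : ((u j)⁻¹) ^ N • x ∈ g⁻¹ • U j :=
      hN N le_rfl ⟨x, hx, rfl⟩
    rw [mul_smul, Set.mem_smul_set_iff_inv_smul_mem]
    rwa [inv_pow] at hx'
  choose t ht using key
  refine ⟨t, Set.eq_univ_of_univ_subset ?_⟩
  refine hsv.trans (Set.iUnion_mono fun j => (subset_closure.trans (ht j)))
end
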